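/- Let Q be a real symmetric traceless 3×3 matrix. Then 6 (tr(Q³))² ≤ (tr(Q²))³. Equivalently, for Q ≠ 0 the biaxiality parameter β = 1 − 6 (tr(Q³))² / (tr(Q²))³ satisfies 0 ≤ β ≤ 1. -/

import Mathlib

open Matrix

lemma key_ineq (x y z : ℝ) (h : x + y + z = 0) :
    6 * (x^3 + y^3 + z^3)^2 ≤ (x^2 + y^2 + z^2)^3 := by
  have hz : z = -x - y := by linarith
  subst hz
  nlinarith [sq_nonneg ((x - y) * (9*(x + y)^2 - (x - y)^2))]

lemma conj_trace {n : ℕ} (U M : Matrix (Fin n) (Fin n) ℝ)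
    (h : U * star U = 1) : (star U * M * U).trace = M.trace := by
  rw [Matrix.trace_mul_cycle, h, Matrix.one_mul]

lemma conjMul' {n : ℕ} (U M N : Matrix (Fin n) (Fin n) ℝ)
    (h : U * star U = 1) :
    (star U * M * U) * (star U * N * U) = star U * (M * N) * U := by
  calc (star U * M * U) * (star U * N * U)
      = star U * (M * ((U * star U) * N)) * U := by simp only [Matrix.mul_assoc]
    _ = star U * (M * N) * U := by rw [h, Matrix.one_mul]

/-- For a real symmetric traceless 3×3 matrix `Q` one has
`6(tr Q³)² ≤ (tr Q²)³`; equivalently, for `Q ≠ 0` the biaxiality parameter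
`β = 1 − 6(tr Q³)²/(tr Q²)³` satisfies `0 ≤ β ≤ 1`. -/
theorem biaxiality_parameter_bounds
    (Q : Matrix (Fin 3) (Fin 3) ℝ) (hsym : Q.IsSymm) (htr : Q.trace = 0) :
    6 * ((Q * Q * Q).trace)^2 ≤ ((Q * Q).trace)^3 ∧
    (Q ≠ 0 →
      0 ≤ 1 - 6 * ((Q * Q * Q).trace)^2 / ((Q * Q).trace)^3 ∧
      1 - 6 * ((Q * Q * Q).trace)^2 / ((Q * Q).trace)^3 ≤ 1) := by
  have hH : Q.IsHermitian := by
    rwa [Matrix.IsHermitian, Matrix.conjTranspose_eq_transpose_of_trivial]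
  set U : Matrix (Fin 3) (Fin 3) ℝ := (hH.eigenvectorUnitary : Matrix (Fin 3) (Fin 3) ℝ) with hU
  have hUU : U * star U = 1 := (Matrix.mem_unitaryGroup_iff).mp hH.eigenvectorUnitary.2
  set d : Fin 3 → ℝ := hH.eigenvalues with hd
  have hdiag : star U * Q * U = Matrix.diagonal d := by
    have := hH.conjStarAlgAut_star_eigenvectorUnitary
    simpa using this
  have hQ : Q = U * Matrix.diagonal d * star U := by
    have := hH.spectral_theorem
    simpa using this
  have htr1 : Q.trace = d 0 + d 1 + d 2 := by
    rw [← conj_trace U Q hUU, hdiag, Matrix.trace_diagonal, Fin.sum_univ_three]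
  have htr2 : (Q * Q).trace = (d 0)^2 + (d 1)^2 + (d 2)^2 := by
    rw [← conj_trace U (Q * Q) hUU, ← conjMul' U Q Q hUU, hdiag,
      Matrix.diagonal_mul_diagonal, Matrix.trace_diagonal, Fin.sum_univ_three]
    ring
  have htr3 : (Q * Q * Q).trace = (d 0)^3 + (d 1)^3 + (d 2)^3 := by
    rw [← conj_trace U (Q * Q * Q) hUU, ← conjMul' U (Q * Q) Q hUU,
      ← conjMul' U Q Q hUU, hdiag, Matrix.diagonal_mul_diagonal,
      Matrix.diagonal_mul_diagonal, Matrix.trace_diagonal, Fin.sum_univ_three]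
    ring
  rw [htr1] at htr
  have hmain : 6 * ((Q * Q * Q).trace)^2 ≤ ((Q * Q).trace)^3 := by
    rw [htr2, htr3]; exact key_ineq _ _ _ htr
  refine ⟨hmain, fun hne => ?_⟩
  have hpos : 0 < (Q * Q).trace := by
    rw [htr2]
    rcases lt_or_eq_of_le (by positivity : (0:ℝ) ≤ (d 0)^2 + (d 1)^2 + (d 2)^2) with h | h
    · exact h
    · exfalso
      have h0 : d 0 = 0 ∧ d 1 = 0 ∧ d 2 = 0 := by
        refine ⟨?_, ?_, ?_⟩ <;>
          nlinarith [sq_nonneg (d 0), sq_nonneg (d 1), sq_nonneg (d 2)]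
      have hd0 : d = 0 := by
        funext i; fin_cases i <;> simp [h0.1, h0.2.1, h0.2.2]
      have hdz : Matrix.diagonal d = 0 := by
        ext i j; simp [hd0, Matrix.diagonal_apply]
      exact hne (by rw [hQ, hdz, Matrix.mul_zero, Matrix.zero_mul])
  have hcube : 0 < ((Q * Q).trace)^3 := by positivity
  constructor
  · have h1 : 6 * ((Q * Q * Q).trace)^2 / ((Q * Q).trace)^3 ≤ 1 :=
      (div_le_one hcube).mpr hmain
    linarith
  · have h2 : 0 ≤ 6 * ((Q * Q * Q).trace)^2 / ((Q * Q).trace)^3 := by positivity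
    linarith
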